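/- arXiv:math/0202228 — 7 statements merged into one kernel-verified Lean document; each statement's English description precedes it below -/
import Mathlib

section
/- Let M be a Garside monoid with Garside element Δ and simple divisors D. If g ∈ M is not left-divisible by Δ and η ∈ D, then g·η is not left-divisible by Δ² (equivalently: the left greedy normal form of g·η begins with at most one Δ). -/
namespace Garside

variable {M : Type*} [Monoid M]

/-- `a` left-divides `b`. -/
def LDvd (a b : M) : Prop := ∃ c, b = a * c

/-- `a` right-divides `b`. -/
def RDvd (a b : M) : Prop := ∃ c, b = c * a

/-- `m` is indivisible (an atom). -/
def Indec (m : M) : Prop := m ≠ 1 ∧ ∀ a b : M, m = a * b → a = 1 ∨ b = 1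

/-- The set of lengths of expressions of `m` as a product of atoms. -/
def exprLengths (m : M) : Set ℕ :=
  {n | ∃ l : List M, (∀ x ∈ l, Indec x) ∧ l.prod = m ∧ l.length = n}

/-- The norm `‖m‖`: supremum of lengths of expressions of `m` as products of atoms. -/
noncomputable def norm (m : M) : ℕ := sSup (exprLengths m)

/-- `M` is a Garside monoid with Garside element `Δ`. -/
structure IsGarside (M : Type*) [Monoid M] (Δ : M) : Prop where
  /- atomicity: every element is a product of atoms, with bounded expression lengths -/
  expr_nonempty : ∀ m : M, (exprLengths m).Nonempty
  expr_bdd : ∀ m : M, BddAbove (exprLengths m)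
  mul_left_cancel : ∀ a b c : M, a * b = a * c → b = c
  mul_right_cancel : ∀ a b c : M, b * a = c * a → b = c
  exists_lgcd : ∀ a b : M, ∃ d, LDvd d a ∧ LDvd d b ∧ ∀ e, LDvd e a → LDvd e b → LDvd e d
  exists_llcm : ∀ a b : M, ∃ l, LDvd a l ∧ LDvd b l ∧ ∀ e, LDvd a e → LDvd b e → LDvd l e
  exists_rgcd : ∀ a b : M, ∃ d, RDvd d a ∧ RDvd d b ∧ ∀ e, RDvd e a → RDvd e b → RDvd e d
  exists_rlcm : ∀ a b : M, ∃ l, RDvd a l ∧ RDvd b l ∧ ∀ e, RDvd a e → RDvd b e → RDvd l e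
  divisor_iff : ∀ x : M, LDvd x Δ ↔ RDvd x Δ
  divisors_finite : {x : M | LDvd x Δ}.Finite
  generates : Submonoid.closure {x : M | LDvd x Δ} = ⊤

/-- The set of simple divisors of the Garside element. -/
def SimpleDivs (Δ : M) : Set M := {x : M | LDvd x Δ}

/-- `G`, with an injective monoid homomorphism `ι : M →* G`, is the group of fractions
of the monoid `M`. -/
structure IsGroupOfFractions (M G : Type*) [Monoid M] [Group G] (ι : M →* G) : Prop where
  injective : Function.Injective ι
  fraction : ∀ g : G, ∃ a b : M, g = ι a * (ι b)⁻¹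

end Garside

open Garside in
/-- Quasi-centrality of the Garside element: every `x` has a "twisted" preimage `w`
with `w * Δ = Δ * x`. -/
theorem garside_quasi_central
    {M : Type*} [Monoid M] (Δ : M) (hG : IsGarside M Δ) :
    ∀ x : M, ∃ w : M, w * Δ = Δ * x := by
  intro x
  have hx : x ∈ Submonoid.closure {x : M | LDvd x Δ} := by
    rw [hG.generates]; trivial
  induction hx using Submonoid.closure_induction with
  | mem s hs =>
    -- s left-divides Δ, hence right-divides it: Δ = p * s
    obtain ⟨p, hp⟩ := (hG.divisor_iff s).mp hs
    -- p left-divides Δ, hence right-divides it: Δ = q * p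
    have hpL : LDvd p Δ := ⟨s, hp⟩
    obtain ⟨q, hq⟩ := (hG.divisor_iff p).mp hpL
    exact ⟨q, by nth_rewrite 1 [hp]; rw [← mul_assoc, ← hq]⟩
  | one => exact ⟨1, by simp⟩
  | mul a b _ _ ha hb =>
    obtain ⟨w₁, h₁⟩ := ha
    obtain ⟨w₂, h₂⟩ := hb
    exact ⟨w₁ * w₂, by rw [mul_assoc, h₂, ← mul_assoc, h₁, mul_assoc]⟩

open Garside in
/-- If `g ∈ M` is not left-divisible by `Δ` and `η` is a simple divisor,
then `g·η` is not left-divisible by `Δ²`. -/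
theorem garside_mul_simple_not_deltaSq_dvd
    {M : Type*} [Monoid M] (Δ : M) (hG : IsGarside M Δ)
    (g η : M) (hg : ¬ LDvd Δ g) (hη : η ∈ SimpleDivs Δ) :
    ¬ LDvd (Δ * Δ) (g * η) := by
  rintro ⟨c, hc⟩
  obtain ⟨ζ, hζ⟩ := hη
  obtain ⟨w, hw⟩ := garside_quasi_central Δ hG (c * ζ)
  apply hg
  refine ⟨w, hG.mul_right_cancel Δ g (Δ * w) ?_⟩
  calc g * Δ = (g * η) * ζ := by rw [hζ, mul_assoc]
    _ = Δ * (Δ * (c * ζ)) := by rw [hc]; simp [mul_assoc]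
    _ = Δ * (w * Δ) := by rw [hw]
    _ = (Δ * w) * Δ := by rw [mul_assoc]
end

section
/- Let M be a Garside monoid with Garside element Δ, let G be its group of fractions, let m be the least positive integer such that Δ^m is central in G, and let G_Δ = G/⟨Δ^m⟩. Then G_Δ contains only finitely many conjugacy classes of finite subgroups. -/
namespace Garside

variable {M : Type*} [Monoid M]

variable {Δ : M} (hG : IsGarside M Δ)

section MonoidLemmas
include hG

/-- all expressions of 1 have length zero -/
lemma expr_one (n : ℕ) (hn : n ∈ exprLengths (1 : M)) : n = 0 := by
  obtain ⟨l, hl, hprod, hlen⟩ := hn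
  by_contra h
  obtain ⟨B, hB⟩ := hG.expr_bdd (1 : M)
  have key : ∀ k : ℕ, k * n ∈ exprLengths (1 : M) := by
    intro k
    induction k with
    | zero => exact ⟨[], by simp, by simp, by simp⟩
    | succ k ih =>
      obtain ⟨l', hl', hprod', hlen'⟩ := ih
      refine ⟨l' ++ l, ?_, by simp [hprod', hprod], by simp [hlen', hlen]; ring⟩
      intro x hx; rcases List.mem_append.1 hx with h | h
      exacts [hl' x h, hl x h]
  have h1 : (B + 1) * n ≤ B := hB (key (B + 1))
  have h2 : B + 1 ≤ (B + 1) * n := Nat.le_mul_of_pos_right _ (Nat.pos_of_ne_zero h)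
  omega

/-- no nontrivial units -/
lemma units_trivial {a b : M} (hab : a * b = 1) : a = 1 ∧ b = 1 := by
  obtain ⟨na, la, hla, hpa, hlena⟩ := hG.expr_nonempty a
  obtain ⟨nb, lb, hlb, hpb, hlenb⟩ := hG.expr_nonempty b
  have : (la.length + lb.length) ∈ exprLengths (1 : M) := by
    refine ⟨la ++ lb, ?_, by simp [hpa, hpb, hab], by simp⟩
    intro x hx; rcases List.mem_append.1 hx with h | h
    exacts [hla x h, hlb x h]
  have h0 := expr_one hG _ this
  have hla0 : la = [] := List.eq_nil_of_length_eq_zero (by omega)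
  have hlb0 : lb = [] := List.eq_nil_of_length_eq_zero (by omega)
  constructor
  · rw [← hpa, hla0]; rfl
  · rw [← hpb, hlb0]; rfl

/-- atoms are simple divisors -/
lemma indec_ldvd {x : M} (hx : Indec x) : LDvd x Δ := by
  have hxtop : x ∈ Submonoid.closure {y : M | LDvd y Δ} := by
    rw [hG.generates]; trivial
  obtain ⟨l, hl, hprod⟩ := Submonoid.exists_list_of_mem_closure hxtop
  clear hxtop
  subst hprod
  induction l with
  | nil => exact absurd rfl hx.1
  | cons h t ih =>
    rcases hx.2 h t.prod (by simp) with h1 | h1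
    · subst h1
      simp only [List.prod_cons, one_mul] at hx ⊢
      exact ih (fun y hy => hl y (List.mem_cons_of_mem _ hy)) hx
    · have : (h :: t).prod = h := by simp [h1]
      rw [this]
      exact hl h List.mem_cons_self

/-- every element is a product of simple divisors, of length at most its norm -/
lemma exists_simple_list (x : M) :
    ∃ l : List M, (∀ y ∈ l, LDvd y Δ) ∧ l.prod = x ∧ l.length ≤ norm x := by
  obtain ⟨n, l, hl, hprod, hlen⟩ := hG.expr_nonempty x
  refine ⟨l, fun y hy => indec_ldvd hG (hl y hy), hprod, ?_⟩
  have : n ∈ exprLengths x := ⟨l, hl, hprod, hlen⟩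
  have := le_csSup (hG.expr_bdd x) this
  unfold norm
  omega

/-- commuting past Δ: x * Δ = Δ * y -/
lemma comm_delta (x : M) : ∃ y, x * Δ = Δ * y := by
  have hxtop : x ∈ Submonoid.closure {y : M | LDvd y Δ} := by
    rw [hG.generates]; trivial
  induction hxtop using Submonoid.closure_induction with
  | mem s hs =>
      obtain ⟨t, ht⟩ := hs
      obtain ⟨v, hv⟩ := (hG.divisor_iff t).2 ⟨s, ht⟩
      refine ⟨v, ?_⟩
      calc s * Δ = s * (t * v) := by rw [← hv]
        _ = (s * t) * v := by rw [mul_assoc]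
        _ = Δ * v := by rw [← ht]
  | one => exact ⟨1, by simp⟩
  | mul a b _ _ iha ihb =>
      obtain ⟨ya, hya⟩ := iha
      obtain ⟨yb, hyb⟩ := ihb
      exact ⟨ya * yb, by rw [mul_assoc, hyb, ← mul_assoc, hya, mul_assoc]⟩

/-- commuting past Δ the other way: Δ * x = y * Δ -/
lemma comm_delta' (x : M) : ∃ y, Δ * x = y * Δ := by
  have hxtop : x ∈ Submonoid.closure {y : M | LDvd y Δ} := by
    rw [hG.generates]; trivial
  induction hxtop using Submonoid.closure_induction with
  | mem s hs =>
      obtain ⟨w, hw⟩ := (hG.divisor_iff s).1 hs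
      obtain ⟨t, ht⟩ := (hG.divisor_iff w).1 ⟨s, hw⟩
      refine ⟨t, ?_⟩
      calc Δ * s = (t * w) * s := by rw [← ht]
        _ = t * (w * s) := by rw [mul_assoc]
        _ = t * Δ := by rw [← hw]
  | one => exact ⟨1, by simp⟩
  | mul a b _ _ iha ihb =>
      obtain ⟨ya, hya⟩ := iha
      obtain ⟨yb, hyb⟩ := ihb
      exact ⟨ya * yb, by rw [← mul_assoc, hya, mul_assoc, hyb, ← mul_assoc]⟩

lemma comm_delta_pow (k : ℕ) (x : M) : ∃ y, x * Δ ^ k = Δ ^ k * y := by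
  induction k generalizing x with
  | zero => exact ⟨x, by simp⟩
  | succ k ih =>
    obtain ⟨y, hy⟩ := comm_delta hG x
    obtain ⟨y', hy'⟩ := ih y
    exact ⟨y', by rw [pow_succ', mul_assoc, ← hy', ← mul_assoc, hy, mul_assoc]⟩

lemma comm_delta_pow' (k : ℕ) (x : M) : ∃ y, Δ ^ k * x = y * Δ ^ k := by
  induction k generalizing x with
  | zero => exact ⟨x, by simp⟩
  | succ k ih =>
    obtain ⟨y, hy⟩ := comm_delta' hG x
    obtain ⟨y', hy'⟩ := ih y
    exact ⟨y', by rw [pow_succ, mul_assoc, hy, ← mul_assoc, hy', mul_assoc]⟩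

/-- a product of simple elements left-divides the corresponding power of Δ -/
lemma prod_ldvd_pow (l : List M) (hl : ∀ y ∈ l, LDvd y Δ) :
    LDvd l.prod (Δ ^ l.length) := by
  induction l using List.reverseRecOn with
  | nil => exact ⟨1, by simp⟩
  | append_singleton l s ih =>
    obtain ⟨b, hb⟩ := ih (fun y hy => hl y (by simp [hy]))
    obtain ⟨s', hs'⟩ := hl s (by simp)
    obtain ⟨y, hy⟩ := comm_delta hG b
    refine ⟨s' * y, ?_⟩
    rw [List.length_append, List.length_singleton, pow_succ, hb, mul_assoc, hy,
      List.prod_append, List.prod_singleton, hs']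
    simp [mul_assoc]

lemma exists_ldvd_pow (x : M) : ∃ k : ℕ, LDvd x (Δ ^ k) := by
  obtain ⟨l, hl, hprod, -⟩ := exists_simple_list hG x
  exact ⟨l.length, hprod ▸ prod_ldvd_pow hG l hl⟩

lemma norm_mono {a b : M} (h : LDvd a b) : norm a ≤ norm b := by
  obtain ⟨c, hc⟩ := h
  apply csSup_le (hG.expr_nonempty a)
  intro n hn
  obtain ⟨la, hla, hpa, hlena⟩ := hn
  obtain ⟨nc, lc, hlc, hpc, hlenc⟩ := hG.expr_nonempty c
  have : la.length + lc.length ∈ exprLengths b := by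
    refine ⟨la ++ lc, ?_, by simp [hpa, hpc, hc], by simp⟩
    intro x hx; rcases List.mem_append.1 hx with h | h
    exacts [hla x h, hlc x h]
  have := le_csSup (hG.expr_bdd b) this
  unfold norm
  omega

/-- products of at most N simple elements form a finite set -/
lemma finite_bounded_prods (N : ℕ) :
    {x : M | ∃ l : List M, (∀ y ∈ l, LDvd y Δ) ∧ l.prod = x ∧ l.length ≤ N}.Finite := by
  induction N with
  | zero =>
    apply Set.Finite.subset (Set.finite_singleton (1 : M))
    rintro x ⟨l, -, hprod, hlen⟩
    have : l = [] := List.eq_nil_of_length_eq_zero (by omega)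
    simp [← hprod, this]
  | succ N ih =>
    apply Set.Finite.subset ((Set.finite_singleton (1 : M)).union
      (Set.Finite.image2 (· * ·) hG.divisors_finite ih))
    rintro x ⟨l, hl, hprod, hlen⟩
    cases l with
    | nil => left; simp [← hprod]
    | cons h t =>
      right
      rw [← hprod, List.prod_cons]
      refine Set.mem_image2_of_mem (hl h (by simp)) ?_
      refine ⟨t, fun y hy => hl y (by simp [hy]), rfl, ?_⟩
      simp at hlen; omega

/-- the set of left divisors of any element is finite -/
lemma finite_ldvd (b : M) : {x : M | LDvd x b}.Finite := by
  apply Set.Finite.subset (finite_bounded_prods hG (norm b))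
  intro x hx
  obtain ⟨l, hl, hprod, hlen⟩ := exists_simple_list hG x
  exact ⟨l, hl, hprod, hlen.trans (norm_mono hG hx)⟩

end MonoidLemmas


end Garside

section GroupOrder

open Garside

variable {M : Type*} [Monoid M] {Δ : M} (hG : IsGarside M Δ)
variable {G : Type*} [Group G] {ι : M →* G} (hfrac : IsGroupOfFractions M G ι)

/-- the left-invariant partial order on `G` induced by the positive cone `ι M`. -/
def PosLe (ι : M →* G) (g h : G) : Prop := ∃ c : M, h = g * ι c

lemma posle_refl (g : G) : PosLe ι g g := ⟨1, by simp⟩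

lemma posle_trans {g h k : G} (h1 : PosLe ι g h) (h2 : PosLe ι h k) : PosLe ι g k := by
  obtain ⟨c, hc⟩ := h1; obtain ⟨d, hd⟩ := h2
  exact ⟨c * d, by rw [hd, hc, map_mul, mul_assoc]⟩

include hG hfrac in
lemma posle_antisymm {g h : G} (h1 : PosLe ι g h) (h2 : PosLe ι h g) : g = h := by
  obtain ⟨c, hc⟩ := h1; obtain ⟨d, hd⟩ := h2
  have : g * (ι c * ι d) = g * 1 := by rw [← mul_assoc, ← hc, ← hd, mul_one]
  have hcd : ι (c * d) = ι 1 := by rw [map_mul, map_one]; exact mul_left_cancel this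
  have := (units_trivial hG (hfrac.injective hcd)).1
  rw [hc, this, map_one, mul_one]

lemma posle_mul_left (x : G) {g h : G} (h1 : PosLe ι g h) : PosLe ι (x * g) (x * h) := by
  obtain ⟨c, hc⟩ := h1; exact ⟨c, by rw [hc, mul_assoc]⟩

lemma posle_of_mul_left {x g h : G} (h1 : PosLe ι (x * g) (x * h)) : PosLe ι g h := by
  obtain ⟨c, hc⟩ := h1
  exact ⟨c, by rw [mul_assoc] at hc; exact mul_left_cancel hc⟩

include hG hfrac in
/-- every element of `G` has the form `(ι Δ ^ k)⁻¹ * ι c`. -/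
lemma exists_rep (g : G) : ∃ (k : ℕ) (c : M), g = ((ι Δ) ^ k)⁻¹ * ι c := by
  obtain ⟨a, b, hab⟩ := hfrac.fraction g
  obtain ⟨k, b', hb'⟩ := exists_ldvd_pow hG b
  have hbinv : (ι b)⁻¹ = ι b' * ((ι Δ) ^ k)⁻¹ :=
    inv_eq_of_mul_eq_one_right (by
      rw [← mul_assoc, ← map_mul, ← hb', map_pow, mul_inv_cancel])
  obtain ⟨c, hc⟩ := comm_delta_pow' hG k (a * b')
  refine ⟨k, c, ?_⟩
  have h2 : g = ι (a * b') * ((ι Δ) ^ k)⁻¹ := by rw [hab, hbinv, map_mul, mul_assoc]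
  have h3 : ι c * (ι Δ) ^ k = (ι Δ) ^ k * ι (a * b') := by
    rw [← map_pow, ← map_mul, ← map_mul, ← hc]
  have key : ((ι Δ) ^ k)⁻¹ * ι c = ι (a * b') * ((ι Δ) ^ k)⁻¹ := by
    calc ((ι Δ) ^ k)⁻¹ * ι c
        = ((ι Δ) ^ k)⁻¹ * (ι c * (ι Δ) ^ k) * ((ι Δ) ^ k)⁻¹ := by group
      _ = ((ι Δ) ^ k)⁻¹ * ((ι Δ) ^ k * ι (a * b')) * ((ι Δ) ^ k)⁻¹ := by rw [h3]
      _ = ι (a * b') * ((ι Δ) ^ k)⁻¹ := by group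
  rw [h2, key]

lemma rep_bump (k i : ℕ) (c : M) :
    ((ι Δ) ^ (k + i))⁻¹ * ι (Δ ^ i * c) = ((ι Δ) ^ k)⁻¹ * ι c := by
  have hcomm : (ι Δ) ^ (k + i) = (ι Δ) ^ i * (ι Δ) ^ k := by
    rw [pow_add, pow_mul_comm]
  rw [map_mul, map_pow, hcomm, mul_inv_rev, mul_assoc, ← mul_assoc ((ι Δ) ^ i)⁻¹,
    inv_mul_cancel, one_mul]

lemma rep_level_raise {k K : ℕ} (hkK : k ≤ K) (c : M) :
    ((ι Δ) ^ k)⁻¹ * ι c = ((ι Δ) ^ K)⁻¹ * ι (Δ ^ (K - k) * c) := by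
  have h := rep_bump (ι := ι) (Δ := Δ) k (K - k) c
  rw [Nat.add_sub_cancel' hkK] at h
  exact h.symm

include hfrac in
lemma posle_level (k : ℕ) (a b : M) :
    PosLe ι (((ι Δ) ^ k)⁻¹ * ι a) (((ι Δ) ^ k)⁻¹ * ι b) ↔ LDvd a b := by
  constructor
  · rintro ⟨c, hc⟩
    rw [mul_assoc] at hc
    have := mul_left_cancel hc
    rw [← map_mul] at this
    exact ⟨c, hfrac.injective this⟩
  · rintro ⟨c, hc⟩
    exact ⟨c, by rw [hc, map_mul, mul_assoc]⟩

end GroupOrder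

section Meets

open Garside

variable {M : Type*} [Monoid M] {Δ : M} (hG : IsGarside M Δ)
variable {G : Type*} [Group G] {ι : M →* G} (hfrac : IsGroupOfFractions M G ι)

lemma ldvd_trans {a b c : M} (h1 : LDvd a b) (h2 : LDvd b c) : LDvd a c := by
  obtain ⟨x, hx⟩ := h1; obtain ⟨y, hy⟩ := h2
  exact ⟨x * y, by rw [hy, hx, mul_assoc]⟩

include hG in
lemma gcd_shift_step {a b d : M}
    (hgr : ∀ e, LDvd e a → LDvd e b → LDvd e d) :
    ∀ e, LDvd e (Δ * a) → LDvd e (Δ * b) → LDvd e (Δ * d) := by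
  intro e h1 h2
  obtain ⟨d₂, g1, g2, g3⟩ := hG.exists_lgcd (Δ * a) (Δ * b)
  obtain ⟨w, hw⟩ := g3 Δ ⟨a, rfl⟩ ⟨b, rfl⟩
  have hwa : LDvd w a := by
    obtain ⟨r, hr⟩ := g1
    refine ⟨r, hG.mul_left_cancel Δ a (w * r) ?_⟩
    rw [← mul_assoc, ← hw, ← hr]
  have hwb : LDvd w b := by
    obtain ⟨r, hr⟩ := g2
    refine ⟨r, hG.mul_left_cancel Δ b (w * r) ?_⟩
    rw [← mul_assoc, ← hw, ← hr]
  obtain ⟨s, hs⟩ := hgr w hwa hwb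
  exact ldvd_trans (g3 e h1 h2) ⟨s, by rw [hs, hw, mul_assoc]⟩

include hG in
lemma gcd_shift (i : ℕ) {a b d : M}
    (hgr : ∀ e, LDvd e a → LDvd e b → LDvd e d) :
    ∀ e, LDvd e (Δ ^ i * a) → LDvd e (Δ ^ i * b) → LDvd e (Δ ^ i * d) := by
  induction i with
  | zero => simpa using hgr
  | succ i ih =>
    have h := gcd_shift_step hG ih
    simpa [pow_succ', mul_assoc] using h

include hG hfrac in
lemma exists_meet_pair (g h : G) :
    ∃ p, PosLe ι p g ∧ PosLe ι p h ∧ ∀ e, PosLe ι e g → PosLe ι e h → PosLe ι e p := by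
  obtain ⟨k₁, c₁, hk₁⟩ := exists_rep hG hfrac g
  obtain ⟨k₂, c₂, hk₂⟩ := exists_rep hG hfrac h
  set K := max k₁ k₂ with hK
  set a := Δ ^ (K - k₁) * c₁ with ha
  set b := Δ ^ (K - k₂) * c₂ with hb
  have hga : g = ((ι Δ) ^ K)⁻¹ * ι a := by
    rw [ha, hk₁, rep_level_raise (le_max_left k₁ k₂) c₁]
  have hhb : h = ((ι Δ) ^ K)⁻¹ * ι b := by
    rw [hb, hk₂, rep_level_raise (le_max_right k₁ k₂) c₂]
  obtain ⟨d, hd1, hd2, hd3⟩ := hG.exists_lgcd a b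
  refine ⟨((ι Δ) ^ K)⁻¹ * ι d, ?_, ?_, ?_⟩
  · rw [hga]; exact (posle_level hfrac K d a).2 hd1
  · rw [hhb]; exact (posle_level hfrac K d b).2 hd2
  · intro e he1 he2
    obtain ⟨k₃, c₃, hk₃⟩ := exists_rep hG hfrac e
    set K' := max K k₃ with hK'
    have he : e = ((ι Δ) ^ K')⁻¹ * ι (Δ ^ (K' - k₃) * c₃) := by
      rw [hk₃, rep_level_raise (le_max_right K k₃) c₃]
    have hga' : g = ((ι Δ) ^ K')⁻¹ * ι (Δ ^ (K' - K) * a) := by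
      rw [hga, rep_level_raise (le_max_left K k₃) a]
    have hhb' : h = ((ι Δ) ^ K')⁻¹ * ι (Δ ^ (K' - K) * b) := by
      rw [hhb, rep_level_raise (le_max_left K k₃) b]
    have hp' : ((ι Δ) ^ K)⁻¹ * ι d = ((ι Δ) ^ K')⁻¹ * ι (Δ ^ (K' - K) * d) :=
      rep_level_raise (le_max_left K k₃) d
    rw [he, hga'] at he1
    rw [he, hhb'] at he2
    rw [he, hp']
    exact (posle_level hfrac K' _ _).2
      (gcd_shift hG (K' - K) hd3 _ ((posle_level hfrac K' _ _).1 he1)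
        ((posle_level hfrac K' _ _).1 he2))

/-- `p` is the meet of the set `S` for the order `PosLe`. -/
def IsMeet (ι : M →* G) (S : Set G) (p : G) : Prop :=
  (∀ s ∈ S, PosLe ι p s) ∧ ∀ e, (∀ s ∈ S, PosLe ι e s) → PosLe ι e p

include hG hfrac in
lemma isMeet_unique {S : Set G} {p q : G} (hp : IsMeet ι S p) (hq : IsMeet ι S q) : p = q :=
  posle_antisymm hG hfrac (hq.2 p hp.1) (hp.2 q hq.1)

lemma isMeet_translate {S : Set G} {p : G} (x : G) (hp : IsMeet ι S p) :
    IsMeet ι ((x * ·) '' S) (x * p) := by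
  constructor
  · rintro s ⟨s₀, hs₀, rfl⟩
    exact posle_mul_left x (hp.1 s₀ hs₀)
  · intro e he
    have h1 : ∀ s ∈ S, PosLe ι (x⁻¹ * e) s := by
      intro s hs
      have := he (x * s) ⟨s, hs, rfl⟩
      have := posle_mul_left x⁻¹ this
      simpa [← mul_assoc] using this
    have := posle_mul_left x (hp.2 _ h1)
    simpa [← mul_assoc] using this

include hG hfrac in
lemma exists_meet_finset (s : Finset G) (hs : s.Nonempty) :
    ∃ p, IsMeet ι (↑s : Set G) p := by
  classical
  revert hs
  induction s using Finset.induction_on with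
  | empty => exact fun hs => absurd hs (by simp)
  | @insert a t hat ih =>
    intro _
    rcases t.eq_empty_or_nonempty with rfl | ht
    · refine ⟨a, ?_, ?_⟩
      · intro s hs
        have : s = a := by simpa using hs
        rw [this]; exact posle_refl a
      · intro e he
        exact he a (by simp)
    · obtain ⟨p', hp'⟩ := ih ht
      obtain ⟨p, h1, h2, h3⟩ := exists_meet_pair hG hfrac a p'
      refine ⟨p, ?_, ?_⟩
      · intro s hs
        rw [Finset.coe_insert, Set.mem_insert_iff] at hs
        rcases hs with rfl | hs
        · exact h1
        · exact posle_trans h2 (hp'.1 s hs)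
      · intro e he
        refine h3 e (he a (by simp)) (hp'.2 e fun s hs => he s ?_)
        rw [Finset.coe_insert]; exact Set.mem_insert_iff.2 (Or.inr hs)

end Meets

section TorsionFree

open Garside

variable {M : Type*} [Monoid M] {Δ : M} (hG : IsGarside M Δ)
variable {G : Type*} [Group G] {ι : M →* G} (hfrac : IsGroupOfFractions M G ι)

include hG hfrac in
lemma garside_torsion_free (g : G) (n : ℕ) (hn : 0 < n) (hgn : g ^ n = 1) : g = 1 := by
  classical
  set s : Finset G := (Finset.range n).image (g ^ ·) with hs
  have hsne : s.Nonempty := ⟨1, by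
    simp only [hs, Finset.mem_image]; exact ⟨0, by simpa using hn, by simp⟩⟩
  obtain ⟨p, hp⟩ := exists_meet_finset hG hfrac s hsne
  have hset : ((g * ·) '' (↑s : Set G)) = (↑s : Set G) := by
    ext x
    constructor
    · rintro ⟨y, hy, rfl⟩
      simp only [hs, Finset.coe_image, Finset.coe_range, Set.mem_image,
        Set.mem_Iio] at hy ⊢
      obtain ⟨i, hi, rfl⟩ := hy
      by_cases hin : i + 1 < n
      · exact ⟨i + 1, hin, by rw [pow_succ']⟩
      · have : i + 1 = n := by omega
        exact ⟨0, hn, by rw [pow_zero, ← hgn, ← this, pow_succ']⟩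
    · intro hx
      simp only [hs, Finset.coe_image, Finset.coe_range, Set.mem_image,
        Set.mem_Iio] at hx ⊢
      obtain ⟨i, hi, rfl⟩ := hx
      rcases Nat.eq_zero_or_pos i with rfl | hipos
      · exact ⟨g ^ (n - 1), ⟨n - 1, by omega, rfl⟩, by
          rw [← pow_succ', show n - 1 + 1 = n by omega, hgn, pow_zero]⟩
      · exact ⟨g ^ (i - 1), ⟨i - 1, by omega, rfl⟩, by
          rw [← pow_succ', show i - 1 + 1 = i by omega]⟩
  have hp' : IsMeet ι (↑s : Set G) (g * p) := hset ▸ isMeet_translate g hp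
  have := isMeet_unique hG hfrac hp' hp
  calc g = (g * p) * p⁻¹ := by group
    _ = p * p⁻¹ := by rw [this]
    _ = 1 := by group

end TorsionFree

section Cyclic

/-- a torsion-free group which is a finite extension of a central cyclic
subgroup is itself cyclic -/
lemma exists_zpowers_eq_top (Γ : Type*) [Group Γ] (ζ : Γ)
    (hζc : ∀ γ : Γ, γ * ζ = ζ * γ) (hζ1 : ζ ≠ 1)
    (htf : ∀ (γ : Γ) (n : ℕ), 0 < n → γ ^ n = 1 → γ = 1)
    [hfin : Finite (Γ ⧸ Subgroup.zpowers ζ)] :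
    ∃ δ : Γ, ∀ γ : Γ, γ ∈ Subgroup.zpowers δ := by
  have hcen : ζ ∈ Subgroup.center Γ := Subgroup.mem_center_iff.2 hζc
  have hle : Subgroup.zpowers ζ ≤ Subgroup.center Γ := Subgroup.zpowers_le.2 hcen
  haveI hfi : (Subgroup.zpowers ζ).FiniteIndex :=
    Subgroup.finiteIndex_of_finite_quotient
  haveI : (Subgroup.center Γ).FiniteIndex := Subgroup.finiteIndex_of_le hle
  set ψ := MonoidHom.transferCenterPow Γ with hψdef
  have hψ : ∀ γ : Γ, (ψ γ : Γ) = γ ^ (Subgroup.center Γ).index := fun γ =>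
    MonoidHom.transferCenterPow_apply γ
  have hker : ∀ γ : Γ, ψ γ = 1 → γ = 1 := by
    intro γ hγ
    have h1 : (ψ γ : Γ) = 1 := by rw [hγ]; rfl
    rw [hψ] at h1
    exact htf γ _ (Nat.pos_of_ne_zero Subgroup.FiniteIndex.index_ne_zero) h1
  have hinj : Function.Injective ψ := (injective_iff_map_eq_one ψ).mpr hker
  -- the group is abelian
  have hcomm : ∀ a b : Γ, a * b = b * a := by
    intro a b
    apply hinj
    have h1 : (ψ a : Γ) * (ψ b : Γ) = (ψ b : Γ) * (ψ a : Γ) :=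
      Subgroup.mem_center_iff.1 (ψ b).2 (ψ a : Γ)
    have h2 : ψ (a * b) = ψ (b * a) := by
      rw [map_mul, map_mul]
      exact Subtype.ext h1
    exact h2
  -- the exponent map
  set n := (Subgroup.zpowers ζ).index with hndef
  have hn0 : n ≠ 0 := Subgroup.FiniteIndex.index_ne_zero
  haveI hnor : (Subgroup.zpowers ζ).Normal := by
    constructor
    intro x hx g
    have : g * x = x * g := Subgroup.mem_center_iff.1 (hle hx) g
    rw [this, mul_assoc, mul_inv_cancel, mul_one]
    exact hx
  have hpowmem : ∀ γ : Γ, γ ^ n ∈ Subgroup.zpowers ζ := fun γ =>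
    Subgroup.pow_index_mem (Subgroup.zpowers ζ) γ
  -- uniqueness of exponents of ζ
  have hzinj : ∀ s t : ℤ, ζ ^ s = ζ ^ t → s = t := by
    intro s t hst
    by_contra hne
    have hu : ζ ^ (s - t) = 1 := by
      rw [zpow_sub, hst, mul_inv_cancel]
    have h1 : ζ ^ ((s - t).natAbs) = 1 := by
      rcases Int.natAbs_eq (s - t) with h | h
      · rw [← zpow_natCast, ← h, hu]
      · rw [← zpow_natCast, show ((s - t).natAbs : ℤ) = -(s - t) by omega,
          zpow_neg, hu, inv_one]
    exact hζ1 (htf ζ _ (by omega) h1)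
  -- injectivity of the n-th power map
  have hpowinj : ∀ γ₁ γ₂ : Γ, γ₁ ^ n = γ₂ ^ n → γ₁ = γ₂ := by
    intro γ₁ γ₂ h12
    have hc : Commute γ₁ γ₂⁻¹ := hcomm γ₁ γ₂⁻¹
    have : (γ₁ * γ₂⁻¹) ^ n = 1 := by
      rw [Commute.mul_pow hc, h12, inv_pow, mul_inv_cancel]
    have := htf _ n (Nat.pos_of_ne_zero hn0) this
    calc γ₁ = (γ₁ * γ₂⁻¹) * γ₂ := by group
      _ = 1 * γ₂ := by rw [this]
      _ = γ₂ := one_mul γ₂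
  -- the subgroup of exponents
  set A : AddSubgroup ℤ :=
    { carrier := {t : ℤ | ∃ γ : Γ, γ ^ n = ζ ^ t}
      zero_mem' := ⟨1, by simp⟩
      add_mem' := by
        rintro t₁ t₂ ⟨γ₁, h₁⟩ ⟨γ₂, h₂⟩
        refine ⟨γ₁ * γ₂, ?_⟩
        rw [Commute.mul_pow (hcomm γ₁ γ₂ : Commute γ₁ γ₂), h₁, h₂, zpow_add]
      neg_mem' := by
        rintro t ⟨γ, h⟩
        exact ⟨γ⁻¹, by rw [inv_pow, h, zpow_neg]⟩ } with hAdef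
  obtain ⟨t₀, hA⟩ := Int.subgroup_cyclic A
  have ht₀A : t₀ ∈ A := by rw [hA]; exact AddSubgroup.subset_closure rfl
  obtain ⟨δ, hδ⟩ := ht₀A
  refine ⟨δ, fun γ => ?_⟩
  obtain ⟨t, ht⟩ := Subgroup.mem_zpowers_iff.1 (hpowmem γ)
  have htA : t ∈ A := ⟨γ, ht.symm⟩
  rw [hA, AddSubgroup.mem_closure_singleton] at htA
  obtain ⟨s, hst⟩ := htA
  have key : γ ^ n = (δ ^ s) ^ n := by
    calc γ ^ n = ζ ^ t := ht.symm
      _ = ζ ^ (s * t₀) := by rw [← hst, smul_eq_mul]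
      _ = (ζ ^ t₀) ^ s := by rw [mul_comm, zpow_mul]
      _ = (δ ^ n) ^ s := by rw [hδ]
      _ = (δ ^ s) ^ n := by
          rw [← zpow_natCast δ n, ← zpow_mul, mul_comm, zpow_mul, zpow_natCast]
  exact Subgroup.mem_zpowers_iff.2 ⟨s, (hpowinj _ _ key).symm⟩

end Cyclic

open Garside in
/-- with `m` the least positive integer such that `Δ^m` is central in `G`
and `G_Δ = G/⟨Δ^m⟩`, the group `G_Δ` has only finitely many conjugacy classes of
finite subgroups. -/
theorem garside_finitely_many_conjugacy_classes_of_finite_subgroups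
    {M G : Type*} [Monoid M] [Group G] (ι : M →* G) (Δ : M)
    (hG : IsGarside M Δ) (hfrac : IsGroupOfFractions M G ι)
    (m : ℕ) (hm : 0 < m) (hcentral : ∀ g : G, g * (ι Δ) ^ m = (ι Δ) ^ m * g)
    (hleast : ∀ k : ℕ, 0 < k → (∀ g : G, g * (ι Δ) ^ k = (ι Δ) ^ k * g) → m ≤ k)
    [hN : (Subgroup.zpowers ((ι Δ) ^ m)).Normal] :
    ∃ T : Finset (Subgroup (G ⧸ Subgroup.zpowers ((ι Δ) ^ m))),
      ∀ H : Subgroup (G ⧸ Subgroup.zpowers ((ι Δ) ^ m)), Finite H →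
        ∃ K ∈ T, ∃ g : G ⧸ Subgroup.zpowers ((ι Δ) ^ m),
          Subgroup.map (MulAut.conj g).toMonoidHom K = H := by
  classical
  set z : G := (ι Δ) ^ m with hzdef
  set q : G →* G ⧸ Subgroup.zpowers z := QuotientGroup.mk' (Subgroup.zpowers z) with hqdef
  by_cases hz1 : z = 1
  · -- degenerate case: the whole group is trivial
    have hΔm : Δ ^ m = 1 := hfrac.injective (by rw [map_pow, ← hzdef, hz1, map_one])
    have hΔ : Δ = 1 := by
      have : Δ * Δ ^ (m - 1) = 1 := by
        rw [← pow_succ', show m - 1 + 1 = m by omega, hΔm]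
      exact (units_trivial hG this).1
    have hM : ∀ x : M, x = 1 := by
      intro x
      have hx : x ∈ Submonoid.closure {y : M | LDvd y Δ} := by rw [hG.generates]; trivial
      have hsub : {y : M | LDvd y Δ} ⊆ {(1 : M)} := by
        rintro y ⟨c, hc⟩
        rw [hΔ] at hc
        exact (units_trivial hG hc.symm).1
      have := Submonoid.closure_mono hsub hx
      rwa [Submonoid.closure_singleton_one, Submonoid.mem_bot] at this
    have hGtriv : ∀ g : G, g = 1 := by
      intro g
      obtain ⟨a, b, hab⟩ := hfrac.fraction g
      rw [hab, hM a, hM b, map_one, inv_one, mul_one]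
    refine ⟨{⊥}, fun H _ => ⟨⊥, Finset.mem_singleton_self _, 1, ?_⟩⟩
    have hH : H = ⊥ := by
      ext x
      simp only [Subgroup.mem_bot]
      constructor
      · intro _
        induction x using QuotientGroup.induction_on with
        | H g => rw [hGtriv g]; rfl
      · rintro rfl; exact H.one_mem
    rw [hH, Subgroup.map_bot]
  · -- main case
    refine ⟨(finite_ldvd hG (Δ ^ m)).toFinset.image
      (fun c => Subgroup.zpowers (q (ι c))), fun H hHfin => ?_⟩
    set Ht : Subgroup G := Subgroup.comap q H with hHtdef
    have hmapH : Subgroup.map q Ht = H :=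
      Subgroup.map_comap_eq_self_of_surjective (QuotientGroup.mk'_surjective _) H
    have hqz : q z = 1 := by
      rw [← MonoidHom.mem_ker, hqdef, QuotientGroup.ker_mk']
      exact Subgroup.mem_zpowers z
    have hzH : z ∈ Ht := by
      rw [hHtdef, Subgroup.mem_comap, hqz]; exact H.one_mem
    set ζ : Ht := ⟨z, hzH⟩ with hζdef
    have hζc : ∀ γ : Ht, γ * ζ = ζ * γ := by
      intro γ; exact Subtype.ext (hcentral γ.1)
    have hζ1 : ζ ≠ 1 := by
      intro h; exact hz1 (congrArg Subtype.val h)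
    have htfΓ : ∀ (γ : Ht) (n : ℕ), 0 < n → γ ^ n = 1 → γ = 1 := by
      intro γ n hn hγn
      have : (γ : G) ^ n = 1 := by
        rw [← SubmonoidClass.coe_pow, hγn]; rfl
      exact Subtype.ext (garside_torsion_free hG hfrac (γ : G) n hn this)
    -- finiteness of the quotient of Ht by the powers of ζ
    set f : Ht →* (G ⧸ Subgroup.zpowers z) := q.comp Ht.subtype with hfdef
    have hkerf : f.ker = Subgroup.zpowers ζ := by
      ext γ
      rw [MonoidHom.mem_ker]
      constructor
      · intro hγ
        have : (γ : G) ∈ Subgroup.zpowers z := by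
          rw [← QuotientGroup.ker_mk' (Subgroup.zpowers z), MonoidHom.mem_ker]
          exact hγ
        obtain ⟨k, hk⟩ := Subgroup.mem_zpowers_iff.1 this
        refine Subgroup.mem_zpowers_iff.2 ⟨k, Subtype.ext ?_⟩
        rw [SubgroupClass.coe_zpow]; exact hk
      · intro hγ
        obtain ⟨k, hk⟩ := Subgroup.mem_zpowers_iff.1 hγ
        have hval : (γ : G) = z ^ k := by
          rw [← hk, SubgroupClass.coe_zpow]
        have : (γ : G) ∈ Subgroup.zpowers z := ⟨k, hval.symm⟩
        rw [← QuotientGroup.ker_mk' (Subgroup.zpowers z), MonoidHom.mem_ker] at this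
        exact this
    have hrange : ∀ x : Ht ⧸ f.ker, QuotientGroup.kerLift f x ∈ H := by
      intro x
      induction x using QuotientGroup.induction_on with
      | H γ =>
        rw [QuotientGroup.kerLift_mk]
        exact Subgroup.mem_comap.1 γ.2
    have hinj' : Function.Injective
        (fun x : Ht ⧸ f.ker => (⟨QuotientGroup.kerLift f x, hrange x⟩ : H)) := by
      intro x y hxy
      exact QuotientGroup.kerLift_injective f (congrArg Subtype.val hxy)
    haveI hfinq : Finite (Ht ⧸ Subgroup.zpowers ζ) := by
      rw [← hkerf]
      exact Finite.of_injective _ hinj'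
    obtain ⟨δ, hδall⟩ := exists_zpowers_eq_top Ht ζ hζc hζ1 htfΓ
    -- Ht is the set of integer powers of δ₀ := δ.val
    have hHt_eq : Ht = Subgroup.zpowers (δ : G) := by
      apply le_antisymm
      · intro x hx
        obtain ⟨k, hk⟩ := Subgroup.mem_zpowers_iff.1 (hδall ⟨x, hx⟩)
        refine Subgroup.mem_zpowers_iff.2 ⟨k, ?_⟩
        rw [← SubgroupClass.coe_zpow, hk]
      · exact Subgroup.zpowers_le.2 δ.2
    obtain ⟨t, ht⟩ := Subgroup.mem_zpowers_iff.1 (hδall ζ)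
    have htval : (δ : G) ^ t = z := by
      rw [← SubgroupClass.coe_zpow] at *
      exact congrArg Subtype.val ht
    have ht0 : t ≠ 0 := by
      intro h; rw [h, zpow_zero] at htval; exact hz1 htval.symm
    -- normalize to a positive exponent
    obtain ⟨δ₁, κ, hκpos, hδ₁κ, hzpδ₁⟩ :
        ∃ (δ₁ : G) (κ : ℕ), 0 < κ ∧ δ₁ ^ κ = z ∧ Subgroup.zpowers δ₁ = Ht := by
      rcases lt_or_gt_of_ne ht0 with htneg | htpos
      · refine ⟨(δ : G)⁻¹, (-t).toNat, by omega, ?_, by rw [Subgroup.zpowers_inv, ← hHt_eq]⟩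
        rw [inv_pow, ← zpow_natCast, Int.toNat_of_nonneg (by omega), ← zpow_neg, neg_neg, htval]
      · refine ⟨(δ : G), t.toNat, by omega, ?_, hHt_eq.symm⟩
        rw [← zpow_natCast, Int.toNat_of_nonneg (by omega), htval]
    -- conjugate δ₁ to a positive element via the meet of its orbit
    set s : Finset G := (Finset.range κ).image (δ₁ ^ ·) with hsdef
    have hsne : s.Nonempty := ⟨1, by
      simp only [hsdef, Finset.mem_image]; exact ⟨0, by simpa using hκpos, by simp⟩⟩
    obtain ⟨d, hd⟩ := exists_meet_finset hG hfrac s hsne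
    have hone_le_z : PosLe ι 1 z := ⟨Δ ^ m, by rw [one_mul, map_pow]⟩
    have hd_one : PosLe ι d 1 := hd.1 1 (by
      simp only [hsdef, Finset.coe_image, Finset.coe_range, Set.mem_image, Set.mem_Iio]
      exact ⟨0, hκpos, by simp⟩)
    have hdlow : ∀ x ∈ ((δ₁ * ·) '' (↑s : Set G)), PosLe ι d x := by
      rintro x ⟨y, hy, rfl⟩
      simp only [hsdef, Finset.coe_image, Finset.coe_range, Set.mem_image, Set.mem_Iio] at hy
      obtain ⟨i, hi, rfl⟩ := hy
      by_cases hiκ : i + 1 < κ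
      · refine hd.1 _ ?_
        simp only [hsdef, Finset.coe_image, Finset.coe_range, Set.mem_image, Set.mem_Iio]
        exact ⟨i + 1, hiκ, by rw [pow_succ']⟩
      · have hik : i + 1 = κ := by omega
        have hz' : δ₁ * δ₁ ^ i = z := by rw [← pow_succ', hik, hδ₁κ]
        show PosLe ι d (δ₁ * δ₁ ^ i)
        rw [hz']
        exact posle_trans hd_one hone_le_z
    have hd2 : PosLe ι d (δ₁ * d) := (isMeet_translate δ₁ hd).2 d hdlow
    obtain ⟨c, hc⟩ := hd2
    -- c is a left divisor of Δ ^ m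
    have hιc : ι c = d⁻¹ * δ₁ * d := by
      rw [mul_assoc, hc, ← mul_assoc, inv_mul_cancel, one_mul]
    have hck : c ^ κ = Δ ^ m := by
      apply hfrac.injective
      rw [map_pow, map_pow]
      have h1 : (ι c) ^ κ = d⁻¹ * δ₁ ^ κ * d := by
        rw [hιc]
        have := conj_pow (i := κ) (a := d⁻¹) (b := δ₁)
        simpa using this
      rw [h1, hδ₁κ]
      have h2 : d * z = z * d := hcentral d
      rw [← hzdef]
      calc d⁻¹ * z * d = d⁻¹ * (z * d) := by rw [mul_assoc]
        _ = d⁻¹ * (d * z) := by rw [← h2]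
        _ = z := by rw [← mul_assoc, inv_mul_cancel, one_mul]
    have hcdvd : LDvd c (Δ ^ m) := by
      refine ⟨c ^ (κ - 1), ?_⟩
      rw [← hck, ← pow_succ', show κ - 1 + 1 = κ by omega]
    -- assemble the result
    refine ⟨Subgroup.zpowers (q (ι c)), ?_, q d, ?_⟩
    · rw [Finset.mem_image]
      exact ⟨c, (Set.Finite.mem_toFinset _).2 hcdvd, rfl⟩
    · have hδ₁eq : δ₁ = d * ι c * d⁻¹ := by
        rw [hιc]; group
    
      calc Subgroup.map (MulAut.conj (q d)).toMonoidHom (Subgroup.zpowers (q (ι c)))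
          = Subgroup.zpowers ((MulAut.conj (q d)).toMonoidHom (q (ι c))) :=
            MonoidHom.map_zpowers _ _
        _ = Subgroup.zpowers (q d * q (ι c) * (q d)⁻¹) := rfl
        _ = Subgroup.zpowers (q δ₁) := by rw [hδ₁eq, map_mul, map_mul, map_inv]
        _ = Subgroup.map q (Subgroup.zpowers δ₁) := (MonoidHom.map_zpowers q δ₁).symm
        _ = Subgroup.map q Ht := by rw [hzpδ₁]
        _ = H := hmapH
end

section
/- Let M be a Garside monoid with Garside element Δ and simple divisors D, and let G be its group of fractions. Suppose Δ is tame with constant c, i.e., ‖Δⁿ‖ ≤ c·n for all n ≥ 0. Then for every g ∈ G, if g = a·Δ^j with a ∈ M not left-divisible by Δ and j ∈ ℤ, the word length of g with respect to the generating set D satisfies |g|_D ≥ (1/c)·‖a‖, i.e., ‖a‖ ≤ c·|g|_D. -/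
namespace Garside

/-- Word length of `g` with respect to a generating set `S`: the least `n` such that
`g` is a product of `n` elements of `S ∪ S⁻¹`. -/
noncomputable def wordLength {G : Type*} [Group G] (S : Set G) (g : G) : ℕ :=
  sInf {n | ∃ l : List G, (∀ x ∈ l, x ∈ S ∨ x⁻¹ ∈ S) ∧ l.prod = g ∧ l.length = n}

end Garside


namespace Garside

variable {M : Type*} [Monoid M] {Δ : M}

lemma norm_mem_aux (hG : IsGarside M Δ) (m : M) : norm m ∈ exprLengths m :=
  Nat.sSup_mem (hG.expr_nonempty m) (hG.expr_bdd m)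

lemma norm_superadd_aux (hG : IsGarside M Δ) (a b : M) :
    norm a + norm b ≤ norm (a * b) := by
  obtain ⟨la, hla, hpa, hna⟩ := norm_mem_aux hG a
  obtain ⟨lb, hlb, hpb, hnb⟩ := norm_mem_aux hG b
  refine le_csSup (hG.expr_bdd _) ⟨la ++ lb, fun x hx => ?_, by simp [hpa, hpb],
    by simp [hna, hnb]⟩
  rcases List.mem_append.1 hx with h | h
  exacts [hla x h, hlb x h]

lemma norm_le_of_ldvd_aux (hG : IsGarside M Δ) {a b : M} (h : LDvd a b) :
    norm a ≤ norm b := by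
  obtain ⟨u, rfl⟩ := h
  exact le_trans (Nat.le_add_right _ _) (norm_superadd_aux hG a u)

lemma push_simple_aux (hG : IsGarside M Δ) {s : M} (hs : LDvd s Δ) :
    ∃ t, s * Δ = Δ * t := by
  obtain ⟨s₁, hs₁⟩ := hs
  obtain ⟨s₂, hs₂⟩ := (hG.divisor_iff s₁).2 ⟨s, hs₁⟩
  refine ⟨s₂, ?_⟩
  calc s * Δ = s * (s₁ * s₂) := by rw [← hs₂]
    _ = (s * s₁) * s₂ := (mul_assoc _ _ _).symm
    _ = Δ * s₂ := by rw [← hs₁]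

lemma push_list_aux (hG : IsGarside M Δ) (l : List M) :
    (∀ x ∈ l, LDvd x Δ) → ∃ m', l.prod * Δ = Δ * m' := by
  induction l with
  | nil => exact fun _ => ⟨1, by simp⟩
  | cons s l ih =>
    intro hl
    obtain ⟨p, hp⟩ := ih fun y hy => hl y (List.mem_cons_of_mem s hy)
    obtain ⟨t, ht⟩ := push_simple_aux hG (hl s List.mem_cons_self)
    exact ⟨t * p, by rw [List.prod_cons, mul_assoc, hp, ← mul_assoc, ht, mul_assoc]⟩

lemma push_aux (hG : IsGarside M Δ) (m : M) : ∃ m', m * Δ = Δ * m' := by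
  have hm : m ∈ Submonoid.closure {x : M | LDvd x Δ} := by
    rw [hG.generates]; trivial
  obtain ⟨l, hl, hlp⟩ := Submonoid.exists_list_of_mem_closure hm
  obtain ⟨m', hm'⟩ := push_list_aux hG l hl
  exact ⟨m', by rw [← hlp, hm']⟩

lemma push_pow_aux (hG : IsGarside M Δ) (m : M) (n : ℕ) :
    ∃ m', m * Δ ^ n = Δ ^ n * m' := by
  induction n with
  | zero => exact ⟨m, by simp⟩
  | succ n ih =>
    obtain ⟨p, hp⟩ := ih
    obtain ⟨q, hq⟩ := push_aux hG p
    refine ⟨q, ?_⟩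
    calc m * Δ ^ (n + 1) = m * (Δ ^ n * Δ) := by rw [pow_succ]
      _ = (m * Δ ^ n) * Δ := (mul_assoc _ _ _).symm
      _ = (Δ ^ n * p) * Δ := by rw [hp]
      _ = Δ ^ n * (p * Δ) := mul_assoc _ _ _
      _ = Δ ^ n * (Δ * q) := by rw [hq]
      _ = (Δ ^ n * Δ) * q := (mul_assoc _ _ _).symm
      _ = Δ ^ (n + 1) * q := by rw [← pow_succ]

lemma ldvd_mul_aux (hG : IsGarside M Δ) {s m : M} {p q : ℕ}
    (h1 : LDvd s (Δ ^ p)) (h2 : LDvd m (Δ ^ q)) :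
    LDvd (s * m) (Δ ^ (p + q)) := by
  obtain ⟨u, hu⟩ := h1
  obtain ⟨v, hv⟩ := h2
  obtain ⟨u', hu'⟩ := push_pow_aux hG u q
  refine ⟨v * u', ?_⟩
  calc Δ ^ (p + q) = Δ ^ p * Δ ^ q := pow_add _ _ _
    _ = (s * u) * Δ ^ q := by rw [← hu]
    _ = s * (u * Δ ^ q) := mul_assoc _ _ _
    _ = s * (Δ ^ q * u') := by rw [hu']
    _ = s * ((m * v) * u') := by rw [← hv]
    _ = (s * m) * (v * u') := by simp [mul_assoc]

lemma key_word_aux {M G : Type*} [Monoid M] [Group G] (ι : M →* G) (Δ : M)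
    (hG : IsGarside M Δ) (l : List G)
    (hl : ∀ x ∈ l, x ∈ ι '' SimpleDivs Δ ∨ x⁻¹ ∈ ι '' SimpleDivs Δ) :
    ∃ (m : M) (k : ℕ), k ≤ l.length ∧ LDvd m (Δ ^ l.length) ∧
      l.prod * (ι Δ) ^ k = ι m := by
  induction l with
  | nil => exact ⟨1, 0, le_refl 0, ⟨1, by simp⟩, by simp⟩
  | cons x l ih =>
    obtain ⟨m', k', hk', hdvd', heq'⟩ := ih fun y hy => hl y (List.mem_cons_of_mem x hy)
    rcases hl x List.mem_cons_self with ⟨s, hs, rfl⟩ | ⟨s, hs, hx⟩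
    · refine ⟨s * m', k', hk'.trans (Nat.le_succ _), ?_, ?_⟩
      · have h1 : LDvd s (Δ ^ 1) := by rw [pow_one]; exact hs
        have := ldvd_mul_aux hG h1 hdvd'
        rw [List.length_cons]
        rwa [Nat.add_comm] at this
      · rw [List.prod_cons, mul_assoc, heq', ← map_mul]
    · obtain ⟨t, ht⟩ := hs
      have hts : LDvd t Δ := (hG.divisor_iff t).2 ⟨s, ht⟩
      obtain ⟨m'', hm''⟩ := push_aux hG m'
      have hm''dvd : LDvd m'' (Δ ^ l.length) := by
        obtain ⟨u, hu⟩ := hdvd'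
        obtain ⟨u₂, hu₂⟩ := push_aux hG u
        refine ⟨u₂, hG.mul_left_cancel Δ _ _ ?_⟩
        calc Δ * Δ ^ l.length = Δ ^ l.length * Δ := by rw [← pow_succ', ← pow_succ]
          _ = (m' * u) * Δ := by rw [← hu]
          _ = m' * (u * Δ) := mul_assoc _ _ _
          _ = m' * (Δ * u₂) := by rw [hu₂]
          _ = (m' * Δ) * u₂ := (mul_assoc _ _ _).symm
          _ = (Δ * m'') * u₂ := by rw [hm'']
          _ = Δ * (m'' * u₂) := mul_assoc _ _ _
      have hxval : x = (ι s)⁻¹ := by rw [hx, inv_inv]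
      refine ⟨t * m'', k' + 1, by simpa using Nat.succ_le_succ hk', ?_, ?_⟩
      · have h1 : LDvd t (Δ ^ 1) := by simpa using hts
        have := ldvd_mul_aux hG h1 hm''dvd
        rw [List.length_cons]
        rwa [Nat.add_comm] at this
      · calc (x :: l).prod * (ι Δ) ^ (k' + 1)
            = x * (l.prod * ((ι Δ) ^ k' * ι Δ)) := by
              rw [List.prod_cons, pow_succ, mul_assoc]
          _ = x * (ι m' * ι Δ) := by rw [← mul_assoc l.prod, heq']
          _ = x * ι (m' * Δ) := by rw [← map_mul]
          _ = x * ι (Δ * m'') := by rw [hm'']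
          _ = x * (ι Δ * ι m'') := by rw [map_mul]
          _ = x * (ι s * ι t * ι m'') := by rw [ht, map_mul]
          _ = ι t * ι m'' := by rw [hxval]; group
          _ = ι (t * m'') := by rw [← map_mul]

end Garside

open Garside in
/-- if `Δ` is tame with constant `c` (`‖Δⁿ‖ ≤ c·n` for all `n`), then for
`g = a·Δʲ` with `a ∈ M` not left-divisible by `Δ` and `j ∈ ℤ`, we have
`‖a‖ ≤ c·|g|_D`, where `|·|_D` is the word length with respect to the simple divisors. -/
theorem garside_tame_wordLength_bound
    {M G : Type*} [Monoid M] [Group G] (ι : M →* G) (Δ : M)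
    (hG : IsGarside M Δ) (hfrac : IsGroupOfFractions M G ι)
    (c : ℝ) (htame : ∀ n : ℕ, (norm (Δ ^ n) : ℝ) ≤ c * n)
    (g : G) (a : M) (j : ℤ) (ha : ¬ LDvd Δ a) (hrep : g = ι a * (ι Δ) ^ j) :
    (norm a : ℝ) ≤ c * wordLength (ι '' SimpleDivs Δ) g := by
  have hΔS : ι Δ ∈ ι '' SimpleDivs Δ := ⟨Δ, ⟨1, (mul_one Δ).symm⟩, rfl⟩
  -- the set of word-representations of `g` is nonempty
  have hne : {n | ∃ l : List G, (∀ x ∈ l, x ∈ ι '' SimpleDivs Δ ∨ x⁻¹ ∈ ι '' SimpleDivs Δ) ∧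
      l.prod = g ∧ l.length = n}.Nonempty := by
    have haM : a ∈ Submonoid.closure {x : M | LDvd x Δ} := by rw [hG.generates]; trivial
    obtain ⟨la, hla, hpa⟩ := Submonoid.exists_list_of_mem_closure haM
    rcases le_or_gt 0 j with hj | hj
    · refine ⟨(la.map ι).length + j.toNat,
        la.map ι ++ List.replicate j.toNat (ι Δ), fun x hx => ?_, ?_, by simp⟩
      · rcases List.mem_append.1 hx with h | h
        · obtain ⟨y, hy, rfl⟩ := List.mem_map.1 h
          exact Or.inl ⟨y, hla y hy, rfl⟩
        · rw [List.eq_of_mem_replicate h]; exact Or.inl hΔS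
      · rw [List.prod_append, List.prod_replicate, ← map_list_prod, hpa, hrep,
          ← zpow_natCast, Int.toNat_of_nonneg hj]
    · refine ⟨(la.map ι).length + (-j).toNat,
        la.map ι ++ List.replicate (-j).toNat (ι Δ)⁻¹, fun x hx => ?_, ?_, by simp⟩
      · rcases List.mem_append.1 hx with h | h
        · obtain ⟨y, hy, rfl⟩ := List.mem_map.1 h
          exact Or.inl ⟨y, hla y hy, rfl⟩
        · rw [List.eq_of_mem_replicate h]; exact Or.inr (by rw [inv_inv]; exact hΔS)
      · have hj' : ((-j).toNat : ℤ) = -j := Int.toNat_of_nonneg (by omega)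
        have hpow : ((ι Δ)⁻¹) ^ (-j).toNat = (ι Δ) ^ (j : ℤ) := by
          rw [inv_pow, ← zpow_natCast, hj', zpow_neg, inv_inv]
        rw [List.prod_append, List.prod_replicate, ← map_list_prod, hpa, hrep, hpow]
  obtain ⟨l, hlmem, hlprod, hllen⟩ :
      ∃ l : List G, (∀ x ∈ l, x ∈ ι '' SimpleDivs Δ ∨ x⁻¹ ∈ ι '' SimpleDivs Δ) ∧
        l.prod = g ∧ l.length = wordLength (ι '' SimpleDivs Δ) g := Nat.sInf_mem hne
  obtain ⟨m, k, hk, hdvd, heq⟩ := key_word_aux ι Δ hG l hlmem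
  rw [hlprod, hrep] at heq
  have heq2 : ι a * (ι Δ) ^ (j + (k : ℤ)) = ι m := by
    rw [zpow_add, zpow_natCast, ← mul_assoc]; exact heq
  rcases le_or_gt 0 (j + (k : ℤ)) with ht | ht
  · have hιeq : ι (a * Δ ^ (j + (k : ℤ)).toNat) = ι m := by
      rw [map_mul, map_pow, ← zpow_natCast, Int.toNat_of_nonneg ht]; exact heq2
    have hma : m = a * Δ ^ (j + (k : ℤ)).toNat := (hfrac.injective hιeq).symm
    have h1 : norm a ≤ norm m :=
      norm_le_of_ldvd_aux hG ⟨Δ ^ (j + (k : ℤ)).toNat, hma⟩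
    have h2 : norm m ≤ norm (Δ ^ l.length) := norm_le_of_ldvd_aux hG hdvd
    calc (norm a : ℝ) ≤ (norm (Δ ^ l.length) : ℝ) := by exact_mod_cast h1.trans h2
      _ ≤ c * l.length := htame _
      _ = c * wordLength (ι '' SimpleDivs Δ) g := by rw [hllen]
  · exfalso
    have hp1 : 1 ≤ (-(j + (k : ℤ))).toNat := by omega
    have hιeq : ι a = ι (m * Δ ^ (-(j + (k : ℤ))).toNat) := by
      rw [map_mul, map_pow, ← zpow_natCast,
        Int.toNat_of_nonneg (by omega : (0 : ℤ) ≤ -(j + (k : ℤ))), ← heq2,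
        mul_assoc, ← zpow_add, show j + (k : ℤ) + -(j + (k : ℤ)) = 0 from by ring,
        zpow_zero, mul_one]
    have ha2 : a = m * Δ ^ (-(j + (k : ℤ))).toNat := hfrac.injective hιeq
    obtain ⟨w, hw⟩ := push_aux hG (m * Δ ^ ((-(j + (k : ℤ))).toNat - 1))
    apply ha
    refine ⟨w, ?_⟩
    rw [ha2, ← hw, mul_assoc, ← pow_succ]
    congr 2
    omega
end

section
/- Let M be a Garside monoid with Garside element Δ and simple divisors D. For a ∈ D let ^*a ∈ D denote the left complement of a, i.e., the unique element with ^*a·a = Δ, and for g ∈ M let LF(g) denote the left gcd of g and Δ. Then for all a, b ∈ D: if LF(^*a·b) = ^*a (i.e., the word ^*a·b is in left greedy normal form), then LF(^*b·a) = ^*b (i.e., ^*b·a is also in left greedy normal form). -/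
namespace Garside

/-- `d` is a left gcd of `a` and `b`: it left-divides both, and every common
left divisor of `a` and `b` left-divides `d`. -/
def IsLGcd {M : Type*} [Monoid M] (d a b : M) : Prop :=
  LDvd d a ∧ LDvd d b ∧ ∀ e, LDvd e a → LDvd e b → LDvd e d

/-- `d` is a right gcd of `a` and `b`. -/
def IsRGcd {M : Type*} [Monoid M] (d a b : M) : Prop :=
  RDvd d a ∧ RDvd d b ∧ ∀ e, RDvd e a → RDvd e b → RDvd e d

end Garside



open Garside in
lemma Garside.exprLengths_one_zero {M : Type*} [Monoid M] {Δ : M} (hG : IsGarside M Δ)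
    {n : ℕ} (hn : n ∈ exprLengths (1 : M)) : n = 0 := by
  obtain ⟨l, hatoms, hprod, hlen⟩ := hn
  by_contra hne
  have hk : ∀ k : ℕ, k * n ∈ exprLengths (1 : M) := by
    intro k
    refine ⟨(List.replicate k l).flatten, ?_, ?_, ?_⟩
    · intro x hx
      rw [List.mem_flatten] at hx
      obtain ⟨s, hs, hxs⟩ := hx
      rw [List.mem_replicate] at hs
      exact hatoms x (hs.2 ▸ hxs)
    · induction k with
      | zero => simp
      | succ k ih => simp [List.replicate_succ, hprod, ih]
    · simp [hlen, Nat.mul_comm]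
  obtain ⟨B, hB⟩ := hG.expr_bdd (1 : M)
  have h1 := hB (hk (B + 1))
  have : 1 ≤ n := Nat.pos_of_ne_zero hne
  nlinarith

open Garside in
lemma Garside.eq_one_of_mul_eq_one {M : Type*} [Monoid M] {Δ : M} (hG : IsGarside M Δ)
    {t v : M} (h : t * v = 1) : t = 1 := by
  obtain ⟨n, l, hl, hp, hlen⟩ := hG.expr_nonempty t
  obtain ⟨m, l', hl', hp', hlen'⟩ := hG.expr_nonempty v
  have hmem : n + m ∈ exprLengths (1 : M) := by
    refine ⟨l ++ l', ?_, ?_, ?_⟩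
    · intro x hx
      rcases List.mem_append.1 hx with hx | hx
      exacts [hl x hx, hl' x hx]
    · rw [List.prod_append, hp, hp', h]
    · simp [hlen, hlen']
  have h0 := Garside.exprLengths_one_zero hG hmem
  have hn : n = 0 := by omega
  rw [hn] at hlen
  rw [List.length_eq_zero_iff.1 hlen] at hp
  simpa using hp.symm

open Garside in
/-- for simple divisors `a, b` with left complements `^*a, ^*b`
(so `^*a·a = Δ = ^*b·b`), if `LF(^*a·b) = ^*a` (i.e. `^*a·b` is in left greedy
normal form), then `LF(^*b·a) = ^*b`. -/
theorem garside_normal_form_symmetric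
    {M : Type*} [Monoid M] (Δ : M) (hG : IsGarside M Δ)
    (a b la lb : M) (ha : a ∈ SimpleDivs Δ) (hb : b ∈ SimpleDivs Δ)
    (hla : la * a = Δ) (hlb : lb * b = Δ)
    (h : IsLGcd la (la * b) Δ) :
    IsLGcd lb (lb * a) Δ := by
  have key : ∀ t : M, LDvd t a → LDvd t b → t = 1 := by
    rintro t ⟨u, hu⟩ ⟨w, hw⟩
    have h1 : LDvd (la * t) (la * b) := ⟨w, by rw [hw, mul_assoc]⟩
    have h2 : LDvd (la * t) Δ := ⟨u, by rw [← hla, hu, mul_assoc]⟩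
    obtain ⟨v, hv⟩ := h.2.2 _ h1 h2
    have hv1 : t * v = 1 :=
      hG.mul_left_cancel la _ _ (by rw [← mul_assoc, ← hv, mul_one])
    exact Garside.eq_one_of_mul_eq_one hG hv1
  refine ⟨⟨a, rfl⟩, ⟨b, hlb.symm⟩, ?_⟩
  intro e he heΔ
  obtain ⟨f, hef, hlbf, hmin⟩ := hG.exists_llcm e lb
  have hf1 : LDvd f (lb * a) := hmin _ he ⟨a, rfl⟩
  have hf2 : LDvd f Δ := hmin _ heΔ ⟨b, hlb.symm⟩
  obtain ⟨t, ht⟩ := hlbf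
  obtain ⟨u, hu⟩ := hf1
  have hta : LDvd t a :=
    ⟨u, (hG.mul_left_cancel lb _ _ (by rw [← mul_assoc, ← ht, ← hu])).symm⟩
  obtain ⟨w, hw⟩ := hf2
  have htb : LDvd t b :=
    ⟨w, (hG.mul_left_cancel lb _ _ (by rw [← mul_assoc, ← ht, ← hw, ← hlb])).symm⟩
  rw [key t hta htb, mul_one] at ht
  exact ht ▸ hef
end

section
/- Let M be a Garside monoid with Garside element Δ, let G be its group of fractions, and let m be the least positive integer such that Δ^m is central in G. Then the kernel of the action of G by left multiplication on the coset space G/⟨Δ⟩ is exactly ⟨Δ^m⟩; that is, {g ∈ G : h⁻¹·g·h ∈ ⟨Δ⟩ for all h ∈ G} = ⟨Δ^m⟩. -/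
section AuxLemmas

theorem my_conj_eq_of_commute {G : Type*} [Group G] {h g : G} (hc : Commute h g) :
    h⁻¹ * g * h = g := by
  rw [mul_assoc, ← hc.eq, ← mul_assoc, inv_mul_cancel, one_mul]

theorem my_aux_not_fin {M G : Type*} [Monoid M] [Group G] (ι : M →* G) (Δ : M)
    (hG : Garside.IsGarside M Δ) (hinj : Function.Injective ι) (hΔ : Δ ≠ 1) :
    ¬ IsOfFinOrder (ι Δ) := by
  intro hfin
  obtain ⟨t, ht, htpow⟩ := isOfFinOrder_iff_pow_eq_one.mp hfin
  have hΔt : Δ ^ t = 1 := hinj (by rw [map_pow, map_one, htpow])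
  obtain ⟨L, l, hatoms, hprod, hlen⟩ := hG.expr_nonempty Δ
  have hL : 1 ≤ L := by
    rcases Nat.eq_zero_or_pos L with h0 | h; swap; · exact h
    exact absurd (by rw [← hprod, List.length_eq_zero_iff.mp (hlen.trans h0), List.prod_nil]) hΔ.symm
  have hmem : ∀ s : ℕ, t * s * L ∈ Garside.exprLengths (1 : M) := by
    intro s
    refine ⟨(List.replicate (t * s) l).flatten, ?_, ?_, ?_⟩
    · intro x hx
      rw [List.mem_flatten] at hx
      obtain ⟨l', hl', hxl'⟩ := hx
      rw [List.mem_replicate] at hl'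
      exact hatoms x (hl'.2 ▸ hxl')
    · rw [List.prod_flatten, List.map_replicate, List.prod_replicate, hprod, pow_mul, hΔt,
        one_pow]
    · rw [List.length_flatten, List.map_replicate, List.sum_replicate, hlen, smul_eq_mul]
  obtain ⟨B, hB⟩ := hG.expr_bdd (1 : M)
  have h1 := hB (hmem (B + 1))
  have h2 : B + 1 ≤ t * (B + 1) * L :=
    calc B + 1 = 1 * (B + 1) * 1 := by ring
    _ ≤ t * (B + 1) * L := Nat.mul_le_mul (Nat.mul_le_mul ht le_rfl) hL
  omega

end AuxLemmas

open Garside in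
/-- with `m` the least positive integer such that `Δ^m` is central in `G`,
the kernel of the left-multiplication action of `G` on `G/⟨Δ⟩` is exactly `⟨Δ^m⟩`. -/
theorem garside_kernel_of_coset_action
    {M G : Type*} [Monoid M] [Group G] (ι : M →* G) (Δ : M)
    (hG : IsGarside M Δ) (hfrac : IsGroupOfFractions M G ι)
    (m : ℕ) (hm : 0 < m) (hcentral : ∀ g : G, g * (ι Δ) ^ m = (ι Δ) ^ m * g)
    (hleast : ∀ k : ℕ, 0 < k → (∀ g : G, g * (ι Δ) ^ k = (ι Δ) ^ k * g) → m ≤ k) :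
    {g : G | ∀ h : G, h⁻¹ * g * h ∈ Subgroup.zpowers (ι Δ)} =
      ↑(Subgroup.zpowers ((ι Δ) ^ m)) := by
  have hcm : ∀ h : G, Commute h ((ι Δ) ^ (m : ℤ)) := fun h => by
    rw [zpow_natCast]; exact hcentral h
  ext g
  simp only [Set.mem_setOf_eq, SetLike.mem_coe]
  constructor
  · intro hg
    obtain ⟨k, hk⟩ := Subgroup.mem_zpowers_iff.mp (by simpa using hg 1)
    -- hk : ι Δ ^ k = g
    by_cases hΔ : Δ = 1
    · exact ⟨0, by simp [← hk, hΔ]⟩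
    · have hinj : Function.Injective fun n : ℤ => (ι Δ) ^ n :=
        injective_zpow_iff_not_isOfFinOrder.mpr
          (my_aux_not_fin ι Δ hG hfrac.injective hΔ)
      have hm0 : (m : ℤ) ≠ 0 := by exact_mod_cast hm.ne'
      -- g is central
      have hcg : ∀ h : G, Commute h g := by
        intro h
        obtain ⟨j, hj⟩ := Subgroup.mem_zpowers_iff.mp (hg h)
        -- hj : ι Δ ^ j = h⁻¹ * g * h
        have hcmk : Commute h ((ι Δ) ^ (k * (m : ℤ))) := by
          rw [mul_comm, zpow_mul]; exact (hcm h).zpow_right k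
        have e1 : (ι Δ) ^ (j * (m : ℤ)) = (ι Δ) ^ (k * (m : ℤ)) := by
          calc (ι Δ) ^ (j * (m : ℤ)) = ((ι Δ) ^ j) ^ (m : ℤ) := zpow_mul _ _ _
          _ = (h⁻¹ * (ι Δ) ^ k * h) ^ (m : ℤ) := by rw [hj, hk]
          _ = ((MulAut.conj h⁻¹) ((ι Δ) ^ k)) ^ (m : ℤ) := by
              rw [MulAut.conj_apply, inv_inv]
          _ = (MulAut.conj h⁻¹) (((ι Δ) ^ k) ^ (m : ℤ)) := (map_zpow _ _ _).symm
          _ = h⁻¹ * (ι Δ) ^ (k * (m : ℤ)) * h := by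
              rw [MulAut.conj_apply, inv_inv, ← zpow_mul]
          _ = h⁻¹ * (h * (ι Δ) ^ (k * (m : ℤ))) := by rw [mul_assoc, ← hcmk.eq]
          _ = (ι Δ) ^ (k * (m : ℤ)) := by rw [← mul_assoc, inv_mul_cancel, one_mul]
        have hjk : j = k := mul_right_cancel₀ hm0 (hinj e1)
        have : h⁻¹ * g * h = g := by rw [← hj, hjk, hk]
        have h2 : g * h = h * g := by
          calc g * h = h * (h⁻¹ * g * h) := by group
          _ = h * g := by rw [this]
        exact h2.symm
      -- now show m ∣ k
      obtain ⟨hr0, hrm⟩ : 0 ≤ k % (m : ℤ) ∧ k % (m : ℤ) < m :=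
        ⟨Int.emod_nonneg k hm0, Int.emod_lt_of_pos k (by exact_mod_cast hm)⟩
      have hqr : (m : ℤ) * (k / (m : ℤ)) + k % (m : ℤ) = k := Int.mul_ediv_add_emod k m
      have hcr : ∀ h : G, Commute h ((ι Δ) ^ (k % (m : ℤ))) := by
        intro h
        have hrw : (ι Δ) ^ (k % (m : ℤ)) = g * ((ι Δ) ^ (m : ℤ)) ^ (-(k / (m : ℤ))) := by
          rw [← hk, ← zpow_mul, ← zpow_add]
          congr 1
          rw [mul_neg]
          linarith
        rw [hrw]
        exact (hcg h).mul_right ((hcm h).zpow_right _)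
      by_cases hr : k % (m : ℤ) = 0
      · refine ⟨k / (m : ℤ), ?_⟩
        show ((ι Δ) ^ m) ^ (k / (m : ℤ)) = g
        rw [← hk, ← zpow_natCast (ι Δ) m, ← zpow_mul]
        congr 1
        linarith
      · exfalso
        have hrpos : 0 < (k % (m : ℤ)).toNat := by omega
        have hcom : ∀ h : G, h * (ι Δ) ^ (k % (m : ℤ)).toNat
            = (ι Δ) ^ (k % (m : ℤ)).toNat * h := by
          intro h
          have := (hcr h).eq
          rwa [← zpow_natCast (ι Δ) (k % (m : ℤ)).toNat, Int.toNat_of_nonneg hr0]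
        have := hleast _ hrpos hcom
        omega
  · rintro ⟨t, ht⟩ h
    have hcm' : Commute h ((ι Δ) ^ m) := hcentral h
    have hcg : Commute h g := ht ▸ hcm'.zpow_right t
    refine Subgroup.mem_zpowers_iff.mpr ⟨(m : ℤ) * t, ?_⟩
    have hconj : h⁻¹ * g * h = g := by
      rw [mul_assoc, ← hcg.eq, ← mul_assoc, inv_mul_cancel, one_mul]
    rw [hconj, ← ht, zpow_mul, zpow_natCast]
end

section
/- Let M be a Garside monoid with Garside element Δ, and for g ∈ M let LF(g) denote the left gcd of g and Δ. Then for all g, h ∈ M: LF(g·h) = LF(g·LF(h)). -/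
namespace Garside

variable {M : Type*} [Monoid M]

/-- In a Garside monoid, there are no nontrivial units. -/
theorem IsGarside.eq_one_of_mul_eq_one {Δ : M} (hG : IsGarside M Δ)
    {x y : M} (hxy : x * y = 1) : x = 1 := by
  by_contra hx
  have hy : y ≠ 1 := by rintro rfl; simp at hxy; exact hx hxy
  obtain ⟨n, l, hl, hlp, hln⟩ := hG.expr_nonempty x
  obtain ⟨m, l', hl', hlp', hln'⟩ := hG.expr_nonempty y
  have hn : l ≠ [] := by rintro rfl; simp at hlp; exact hx hlp.symm
  have hn1 : 1 ≤ l.length := List.length_pos_iff.mpr hn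
  obtain ⟨B, hB⟩ := hG.expr_bdd 1
  -- repeated concatenation gives unbounded expressions of 1
  have key : ∀ k : ℕ, (k * (l ++ l').length) ∈ exprLengths (1 : M) := by
    intro k
    induction k with
    | zero => exact ⟨[], by simp⟩
    | succ k ih =>
      obtain ⟨L, hL, hLp, hLn⟩ := ih
      refine ⟨(l ++ l') ++ L, ?_, ?_, ?_⟩
      · intro z hz
        rcases List.mem_append.mp hz with hz | hz
        · rcases List.mem_append.mp hz with hz | hz
          · exact hl z hz
          · exact hl' z hz
        · exact hL z hz
      · simp [List.prod_append, hlp, hlp', hxy, hLp]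
      · simp [hLn]; ring
  have hBk := hB (key (B + 1))
  have : B + 1 ≤ (B + 1) * (l ++ l').length := by
    have : 1 ≤ (l ++ l').length := by
      simp only [List.length_append]; omega
    calc B + 1 = (B + 1) * 1 := by ring
      _ ≤ (B + 1) * (l ++ l').length := Nat.mul_le_mul_left _ this
  omega

theorem IsGarside.ldvd_antisymm {Δ : M} (hG : IsGarside M Δ)
    {a b : M} (hab : LDvd a b) (hba : LDvd b a) : a = b := by
  obtain ⟨c, rfl⟩ := hab
  obtain ⟨c', hc'⟩ := hba
  have : a * 1 = a * (c * c') := by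
    rw [mul_one, ← mul_assoc, ← hc']
  have h1 : c * c' = 1 := (hG.mul_left_cancel _ _ _ this).symm
  have : c = 1 := hG.eq_one_of_mul_eq_one h1
  rw [this, mul_one]

/-- Commutation with the Garside element. -/
theorem IsGarside.exists_delta_comm {Δ : M} (hG : IsGarside M Δ)
    (x : M) : ∃ y, x * Δ = Δ * y := by
  have hx : x ∈ Submonoid.closure {x : M | LDvd x Δ} := by
    rw [hG.generates]; trivial
  induction hx using Submonoid.closure_induction with
  | mem s hs =>
    obtain ⟨s', hs'⟩ := hs
    have hrd : RDvd s' Δ := ⟨s, hs'⟩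
    obtain ⟨s'', hs''⟩ := (hG.divisor_iff s').mpr hrd
    refine ⟨s'', ?_⟩
    conv_lhs => rw [hs'']
    rw [← mul_assoc, ← hs']
  | one => exact ⟨1, by rw [one_mul, mul_one]⟩
  | mul a b _ _ iha ihb =>
    obtain ⟨ya, hya⟩ := iha
    obtain ⟨yb, hyb⟩ := ihb
    exact ⟨ya * yb, by rw [mul_assoc, hyb, ← mul_assoc, hya, mul_assoc]⟩

theorem LDvd.trans {a b c : M} (h1 : LDvd a b) (h2 : LDvd b c) : LDvd a c := by
  obtain ⟨u, rfl⟩ := h1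
  obtain ⟨v, rfl⟩ := h2
  exact ⟨u * v, mul_assoc _ _ _⟩

end Garside


open Garside in
/-- `LF(g·h) = LF(g·LF(h))`, where `LF(x)` denotes the left gcd of
`x` and `Δ` (a left front; left gcds are unique, so we phrase this as: any left
front of `g·h` equals any left front of `g·LF(h)`). -/
theorem garside_leftFront_mul
    {M : Type*} [Monoid M] (Δ : M) (hG : IsGarside M Δ)
    (g h d e f : M)
    (hd : IsLGcd d h Δ) (he : IsLGcd e (g * h) Δ) (hf : IsLGcd f (g * d) Δ) :
    e = f := by
  -- f divides e
  have hfe : LDvd f e := by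
    obtain ⟨c, hc⟩ := hd.1
    have hgd : LDvd (g * d) (g * h) := ⟨c, by rw [hc, mul_assoc]⟩
    exact he.2.2 f (hf.1.trans hgd) hf.2.1
  -- e divides f
  have hef : LDvd e f := by
    obtain ⟨l, hel, hgl, hlmin⟩ := hG.exists_llcm e g
    have hlgh : LDvd l (g * h) := hlmin _ he.1 ⟨h, rfl⟩
    have hlgD : LDvd l (g * Δ) := by
      refine hlmin _ ?_ ⟨Δ, rfl⟩
      obtain ⟨y, hy⟩ := hG.exists_delta_comm g
      exact he.2.1.trans ⟨y, hy⟩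
    obtain ⟨t, rfl⟩ := hgl
    obtain ⟨u, hu⟩ := hlgh
    have hth : LDvd t h := ⟨u, hG.mul_left_cancel g _ _ (by rw [← mul_assoc, ← hu])⟩
    obtain ⟨v, hv⟩ := hlgD
    have htD : LDvd t Δ := ⟨v, hG.mul_left_cancel g _ _ (by rw [← mul_assoc, ← hv])⟩
    have htd : LDvd t d := hd.2.2 t hth htD
    have hegd : LDvd e (g * d) := by
      refine hel.trans ?_
      obtain ⟨w, rfl⟩ := htd
      exact ⟨w, (mul_assoc _ _ _).symm⟩
    exact hf.2.2 e hegd he.2.1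
  exact hG.ldvd_antisymm hef hfe
end

section
/- Let M be a Garside monoid with Garside element Δ and simple divisors D. Then there is a bijection σ : D → D such that Δ·μ = σ(μ)·Δ for all μ ∈ D; consequently there exists a positive integer m such that Δ^m is central in M. Moreover σ preserves the norm: if μ ∈ D can be expressed as a product of n atoms, then so can σ(μ); in particular ‖σ(μ)‖ = ‖μ‖ for all μ ∈ D. -/
open Garside in
/-- there is a bijection `σ` of the simple divisors with
`Δ·μ = σ(μ)·Δ`; some positive power of `Δ` is central; and `σ` preserves
expressibility as a product of `n` atoms, hence preserves the norm. -/
theorem garside_conjugation_by_delta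
    {M : Type*} [Monoid M] (Δ : M) (hG : IsGarside M Δ) :
    ∃ σ : M → M,
      Set.BijOn σ (SimpleDivs Δ) (SimpleDivs Δ) ∧
      (∀ μ ∈ SimpleDivs Δ, Δ * μ = σ μ * Δ) ∧
      (∃ m : ℕ, 0 < m ∧ ∀ x : M, Δ ^ m * x = x * Δ ^ m) ∧
      (∀ μ ∈ SimpleDivs Δ, ∀ n : ℕ, n ∈ exprLengths μ → n ∈ exprLengths (σ μ)) ∧
      (∀ μ ∈ SimpleDivs Δ, norm (σ μ) = norm μ) := by

  classical
  set D : Set M := SimpleDivs Δ with hD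
  -- basic cancellation
  have lcancel : ∀ a b c : M, a * b = a * c → b = c := hG.mul_left_cancel
  have rcancel : ∀ a b c : M, b * a = c * a → b = c := hG.mul_right_cancel
  -- existence of σ and τ values
  have hσex : ∀ μ ∈ D, ∃ ν, ν ∈ D ∧ Δ * μ = ν * Δ := by
    intro μ hμ
    obtain ⟨c, hc⟩ := (hG.divisor_iff μ).mp hμ
    have hcD : c ∈ D := ⟨μ, hc⟩
    obtain ⟨d, hd⟩ := (hG.divisor_iff c).mp hcD
    refine ⟨d, ⟨c, hd⟩, ?_⟩
    calc Δ * μ = d * c * μ := by rw [← hd]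
    _ = d * (c * μ) := by rw [mul_assoc]
    _ = d * Δ := by rw [← hc]
  have hτex : ∀ ν ∈ D, ∃ μ, μ ∈ D ∧ Δ * μ = ν * Δ := by
    intro ν hν
    obtain ⟨c, hc⟩ := hν
    have hcD : c ∈ D := (hG.divisor_iff c).mpr ⟨ν, hc⟩
    obtain ⟨μ, hμ⟩ := hcD
    refine ⟨μ, (hG.divisor_iff μ).mpr ⟨c, hμ⟩, ?_⟩
    calc Δ * μ = ν * c * μ := by rw [← hc]
    _ = ν * (c * μ) := by rw [mul_assoc]
    _ = ν * Δ := by rw [← hμ]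
  let σ : M → M := fun μ => if h : μ ∈ D then (hσex μ h).choose else μ
  let τ : M → M := fun ν => if h : ν ∈ D then (hτex ν h).choose else ν
  have hσmem : ∀ μ ∈ D, σ μ ∈ D := by
    intro μ h; show (if h : μ ∈ D then (hσex μ h).choose else μ) ∈ D
    rw [dif_pos h]; exact (hσex μ h).choose_spec.1
  have hσeq : ∀ μ ∈ D, Δ * μ = σ μ * Δ := by
    intro μ h; show Δ * μ = (if h : μ ∈ D then (hσex μ h).choose else μ) * Δ
    rw [dif_pos h]; exact (hσex μ h).choose_spec.2
  have hτmem : ∀ ν ∈ D, τ ν ∈ D := by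
    intro ν h; show (if h : ν ∈ D then (hτex ν h).choose else ν) ∈ D
    rw [dif_pos h]; exact (hτex ν h).choose_spec.1
  have hτeq : ∀ ν ∈ D, Δ * τ ν = ν * Δ := by
    intro ν h; show Δ * (if h : ν ∈ D then (hτex ν h).choose else ν) = ν * Δ
    rw [dif_pos h]; exact (hτex ν h).choose_spec.2
  have hστ : ∀ ν ∈ D, σ (τ ν) = ν := by
    intro ν hν
    apply rcancel Δ
    rw [← hσeq _ (hτmem ν hν), hτeq ν hν]
  have hτσ : ∀ μ ∈ D, τ (σ μ) = μ := by
    intro μ hμ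
    apply lcancel Δ
    rw [hτeq _ (hσmem μ hμ), ← hσeq μ hμ]
  have hinj : Set.InjOn σ D := by
    intro a ha b hb hab
    apply lcancel Δ
    rw [hσeq a ha, hσeq b hb, hab]
  have hbij : Set.BijOn σ D D :=
    ⟨hσmem, hinj, fun ν hν => ⟨τ ν, hτmem ν hν, hστ ν hν⟩⟩
  -- atoms are simple
  have hatomD : ∀ a : M, Indec a → a ∈ D := by
    intro a ha
    have hmem : a ∈ Submonoid.closure {x : M | LDvd x Δ} := by
      rw [hG.generates]; trivial
    obtain ⟨l, hl, hlp⟩ := Submonoid.exists_list_of_mem_closure hmem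
    clear hmem
    induction l generalizing a with
    | nil => exact absurd hlp.symm ha.1
    | cons x t ih =>
      simp only [List.prod_cons] at hlp
      rcases ha.2 x t.prod hlp.symm with h1 | h1
      · rw [h1, one_mul] at hlp
        exact ih a ha (fun y hy => hl y (List.mem_cons_of_mem _ hy)) hlp
      · rw [h1, mul_one] at hlp
        rw [← hlp]; exact hl x List.mem_cons_self
  -- σ preserves atoms
  have hσatom : ∀ a ∈ D, Indec a → Indec (σ a) := by
    intro a haD ha
    constructor
    · intro h1
      apply ha.1
      apply lcancel Δ
      rw [hσeq a haD, h1, one_mul, mul_one]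
    · intro u v huv
      obtain ⟨w, hw⟩ := hσmem a haD
      have huD : u ∈ D := ⟨v * w, by rw [hw, huv, mul_assoc]⟩
      obtain ⟨z, hz⟩ := (hG.divisor_iff (σ a)).mp (hσmem a haD)
      have hvD : v ∈ D := (hG.divisor_iff v).mpr ⟨z * u, by rw [hz, huv, mul_assoc]⟩
      have key : a = τ u * τ v := by
        apply lcancel Δ
        calc Δ * a = σ a * Δ := hσeq a haD
        _ = u * (v * Δ) := by rw [huv, mul_assoc]
        _ = u * (Δ * τ v) := by rw [hτeq v hvD]
        _ = (Δ * τ u) * τ v := by rw [hτeq u huD, mul_assoc]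
        _ = Δ * (τ u * τ v) := by rw [mul_assoc]
      rcases ha.2 _ _ key with h1 | h1
      · left
        apply rcancel Δ
        have := hτeq u huD
        rw [h1, mul_one] at this
        rw [← this, one_mul]
      · right
        apply rcancel Δ
        have := hτeq v hvD
        rw [h1, mul_one] at this
        rw [← this, one_mul]
  -- τ preserves atoms
  have hτatom : ∀ a ∈ D, Indec a → Indec (τ a) := by
    intro a haD ha
    constructor
    · intro h1
      apply ha.1
      apply rcancel Δ
      have := hτeq a haD
      rw [h1, mul_one] at this
      rw [← this, one_mul]
    · intro u v huv
      obtain ⟨w, hw⟩ := hτmem a haD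
      have huD : u ∈ D := ⟨v * w, by rw [hw, huv, mul_assoc]⟩
      obtain ⟨z, hz⟩ := (hG.divisor_iff (τ a)).mp (hτmem a haD)
      have hvD : v ∈ D := (hG.divisor_iff v).mpr ⟨z * u, by rw [hz, huv, mul_assoc]⟩
      have key : a = σ u * σ v := by
        apply rcancel Δ
        calc a * Δ = Δ * τ a := (hτeq a haD).symm
        _ = (Δ * u) * v := by rw [huv, mul_assoc]
        _ = (σ u * Δ) * v := by rw [hσeq u huD]
        _ = σ u * (σ v * Δ) := by rw [mul_assoc, hσeq v hvD]
        _ = (σ u * σ v) * Δ := by rw [mul_assoc]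
      rcases ha.2 _ _ key with h1 | h1
      · left
        apply lcancel Δ
        have := hσeq u huD
        rw [h1, one_mul] at this
        rw [this, mul_one]
      · right
        apply lcancel Δ
        have := hσeq v hvD
        rw [h1, one_mul] at this
        rw [this, mul_one]
  -- list conjugation lemmas
  have hlistσ : ∀ l : List M, (∀ x ∈ l, x ∈ D) → Δ * l.prod = (l.map σ).prod * Δ := by
    intro l
    induction l with
    | nil => intro _; simp
    | cons x t ih =>
      intro hl
      have hx : x ∈ D := hl x List.mem_cons_self
      have ht := ih (fun y hy => hl y (List.mem_cons_of_mem _ hy))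
      simp only [List.prod_cons, List.map_cons]
      calc Δ * (x * t.prod) = (Δ * x) * t.prod := by rw [mul_assoc]
      _ = σ x * (Δ * t.prod) := by rw [hσeq x hx, mul_assoc]
      _ = σ x * ((t.map σ).prod * Δ) := by rw [ht]
      _ = σ x * (t.map σ).prod * Δ := by rw [mul_assoc]
  have hlistτ : ∀ l : List M, (∀ x ∈ l, x ∈ D) → l.prod * Δ = Δ * (l.map τ).prod := by
    intro l
    induction l with
    | nil => intro _; simp
    | cons x t ih =>
      intro hl
      have hx : x ∈ D := hl x List.mem_cons_self
      have ht := ih (fun y hy => hl y (List.mem_cons_of_mem _ hy))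
      simp only [List.prod_cons, List.map_cons]
      calc (x * t.prod) * Δ = x * (t.prod * Δ) := by rw [mul_assoc]
      _ = x * (Δ * (t.map τ).prod) := by rw [ht]
      _ = (Δ * τ x) * (t.map τ).prod := by rw [← mul_assoc, hτeq x hx]
      _ = Δ * (τ x * (t.map τ).prod) := by rw [mul_assoc]
  -- expression lengths
  have hexprσ : ∀ μ ∈ D, ∀ n : ℕ, n ∈ exprLengths μ → n ∈ exprLengths (σ μ) := by
    intro μ hμ n hn
    obtain ⟨l, hla, hlp, hll⟩ := hn
    have hlD : ∀ x ∈ l, x ∈ D := fun x hx => hatomD x (hla x hx)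
    refine ⟨l.map σ, ?_, ?_, by rw [List.length_map, hll]⟩
    · intro x hx
      obtain ⟨y, hy, rfl⟩ := List.mem_map.mp hx
      exact hσatom y (hlD y hy) (hla y hy)
    · apply rcancel Δ
      rw [← hlistσ l hlD, hlp, hσeq μ hμ]
  have hexprτ : ∀ ν ∈ D, ∀ n : ℕ, n ∈ exprLengths ν → n ∈ exprLengths (τ ν) := by
    intro ν hν n hn
    obtain ⟨l, hla, hlp, hll⟩ := hn
    have hlD : ∀ x ∈ l, x ∈ D := fun x hx => hatomD x (hla x hx)
    refine ⟨l.map τ, ?_, ?_, by rw [List.length_map, hll]⟩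
    · intro x hx
      obtain ⟨y, hy, rfl⟩ := List.mem_map.mp hx
      exact hτatom y (hlD y hy) (hla y hy)
    · apply lcancel Δ
      rw [← hlistτ l hlD, hlp, hτeq ν hν]
  -- central power of Δ
  haveI : Fintype D := hG.divisors_finite.fintype
  let g : D → D := fun x => ⟨σ x.1, hσmem x.1 x.2⟩
  have ginj : Function.Injective g := by
    intro a b hab
    exact Subtype.ext (hinj a.2 b.2 (congrArg Subtype.val hab))
  have gbij : Function.Bijective g := Finite.injective_iff_bijective.mp ginj
  let e : Equiv.Perm D := Equiv.ofBijective g gbij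
  have hepow : ∀ (k : ℕ) (x : D), (e ^ k) x = g^[k] x := by
    intro k
    induction k with
    | zero => intro x; simp
    | succ k ih =>
      intro x
      rw [pow_succ, Equiv.Perm.mul_apply, Function.iterate_succ_apply]
      exact ih (e x)
  set m : ℕ := orderOf e with hm
  have hmpos : 0 < m := orderOf_pos e
  have gm : ∀ x : D, g^[m] x = x := by
    intro x
    rw [← hepow m x, pow_orderOf_eq_one e, Equiv.Perm.one_apply]
  have iterg : ∀ (k : ℕ) (x : D), Δ ^ k * (x : M) = ((g^[k] x : D) : M) * Δ ^ k := by
    intro k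
    induction k with
    | zero => intro x; simp
    | succ k ih =>
      intro x
      calc Δ ^ (k + 1) * (x : M) = Δ ^ k * (Δ * (x : M)) := by
            rw [pow_succ, mul_assoc]
      _ = Δ ^ k * ((σ x : M) * Δ) := by rw [hσeq x.1 x.2]
      _ = (Δ ^ k * ((g x : D) : M)) * Δ := by rw [mul_assoc]
      _ = (((g^[k] (g x) : D) : M) * Δ ^ k) * Δ := by rw [ih (g x)]
      _ = ((g^[k + 1] x : D) : M) * Δ ^ (k + 1) := by
            rw [Function.iterate_succ_apply, pow_succ, mul_assoc]
  have hcentD : ∀ μ ∈ D, Δ ^ m * μ = μ * Δ ^ m := by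
    intro μ hμ
    have := iterg m ⟨μ, hμ⟩
    rwa [gm ⟨μ, hμ⟩] at this
  have hcent : ∀ x : M, Δ ^ m * x = x * Δ ^ m := by
    intro x
    have hx : x ∈ Submonoid.closure {y : M | LDvd y Δ} := by
      rw [hG.generates]; trivial
    induction hx using Submonoid.closure_induction with
    | mem y hy => exact hcentD y hy
    | one => rw [mul_one, one_mul]
    | mul a b _ _ ha hb =>
      calc Δ ^ m * (a * b) = (Δ ^ m * a) * b := by rw [mul_assoc]
      _ = a * (Δ ^ m * b) := by rw [ha, mul_assoc]
      _ = a * b * Δ ^ m := by rw [hb, mul_assoc]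
  -- norm preservation
  have hnorm : ∀ μ ∈ D, norm (σ μ) = norm μ := by
    intro μ hμ
    have hset : exprLengths (σ μ) = exprLengths μ := by
      apply Set.Subset.antisymm
      · intro n hn
        have := hexprτ (σ μ) (hσmem μ hμ) n hn
        rwa [hτσ μ hμ] at this
      · intro n hn
        exact hexprσ μ hμ n hn
    simp only [Garside.norm, hset]
  exact ⟨σ, hbij, hσeq, ⟨m, hmpos, hcent⟩, hexprσ, hnorm⟩
end
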